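/- Let u_n = Σ_{k=0}^n C(n,k)^2·C(n+k,k)·C(2k,n). Then for all integers n ≥ 2, u_{2n} ≡ u_n (mod 8). -/

import Mathlib

/-- Cooper's sporadic sequence `s₇`. -/
def cooperS7 (n : ℕ) : ℤ :=
  ∑ k ∈ Finset.range (n + 1),
    (n.choose k : ℤ) ^ 2 * ((n + k).choose k : ℤ) * ((2 * k).choose n : ℤ)

/-- Term identity: rewrite each summand via trinomial revision. -/
lemma cooper_term_eq (n k : ℕ) :
    n.choose k ^ 2 * (n + k).choose k * (2 * k).choose n
      = (n + k).choose (2 * k) * ((2 * k).choose k) ^ 2 * k.choose (n - k) := by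
  rcases le_or_gt k n with hkn | hkn
  · rcases le_or_gt n (2 * k) with hn2k | hn2k
    · have h1 : (2 * k).choose n * n.choose k = (2 * k).choose k * k.choose (n - k) := by
        have := Nat.choose_mul (n := 2 * k) (k := n) (s := k) hkn
        simpa [show 2 * k - k = k by omega] using this
      have h2 : (n + k).choose (2 * k) * (2 * k).choose k = (n + k).choose k * n.choose k := by
        have := Nat.choose_mul (n := n + k) (k := 2 * k) (s := k) (by omega)
        simpa [show n + k - k = n by omega, show 2 * k - k = k by omega] using this
      calc n.choose k ^ 2 * (n + k).choose k * (2 * k).choose n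
          = ((n + k).choose k * n.choose k) * ((2 * k).choose n * n.choose k) := by ring
        _ = ((n + k).choose (2 * k) * (2 * k).choose k)
              * ((2 * k).choose k * k.choose (n - k)) := by rw [h1, h2]
        _ = (n + k).choose (2 * k) * ((2 * k).choose k) ^ 2 * k.choose (n - k) := by ring
    · rw [Nat.choose_eq_zero_of_lt hn2k,
        Nat.choose_eq_zero_of_lt (show k < n - k by omega)]
      ring
  · rw [Nat.choose_eq_zero_of_lt hkn,
      Nat.choose_eq_zero_of_lt (show n + k < 2 * k by omega)]
    ring

/-- Central binomial halving. -/
lemma central_eq_two_mul (k : ℕ) :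
    (2 * (k + 1)).choose (k + 1) = 2 * ((2 * k + 1).choose k) := by
  have hsymm : (2 * k + 1).choose (k + 1) = (2 * k + 1).choose k := by
    have := Nat.choose_symm (n := 2 * k + 1) (k := k) (by omega)
    simpa [show 2 * k + 1 - k = k + 1 by omega] using this
  have : (2 * (k + 1)) = (2 * k + 1) + 1 := by omega
  rw [this, Nat.choose_succ_succ, hsymm]
  omega

/-- Lucas' theorem mod 2. -/
lemma lucas_two (n k : ℕ) :
    n.choose k % 2 = ((n % 2).choose (k % 2) * ((n / 2).choose (k / 2))) % 2 :=
  Choose.choose_modEq_choose_mod_mul_choose_div_nat (p := 2)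

/-- If `C(2k+1, k)` is odd then `k+1` is a power of two. -/
lemma pow_two_of_odd_choose : ∀ k : ℕ, (2 * k + 1).choose k % 2 = 1 → ∃ m, k + 1 = 2 ^ m := by
  intro k
  induction k using Nat.strong_induction_on with
  | _ k ih =>
    intro hodd
    have hl := lucas_two (2 * k + 1) k
    rw [hodd] at hl
    have h2 : (2 * k + 1) % 2 = 1 := by omega
    have h3 : (2 * k + 1) / 2 = k := by omega
    rw [h2, h3] at hl
    have hone : (Nat.choose 1 (k % 2)) = 1 := by
      rcases Nat.mod_two_eq_zero_or_one k with h | h <;> simp [h]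
    rw [hone, one_mul] at hl
    rcases Nat.even_or_odd k with he | ho
    · rcases he with ⟨j, hj⟩
      rcases Nat.eq_zero_or_pos j with hj0 | hj1
      · exact ⟨0, by omega⟩
      · -- k = 2j, j ≥ 1 : C(2j, j) is even, contradiction
        obtain ⟨i, hi⟩ : ∃ i, j = i + 1 := ⟨j - 1, by omega⟩
        have : k.choose (k / 2) = 2 * ((2 * i + 1).choose i) := by
          rw [show k = 2 * (i + 1) by omega, show 2 * (i + 1) / 2 = i + 1 by omega]
          exact central_eq_two_mul i
        omega
    · rcases ho with ⟨j, hj⟩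
      have hdiv : k / 2 = j := by omega
      rw [hdiv, show k = 2 * j + 1 by omega] at hl
      obtain ⟨m, hm⟩ := ih j (by omega) (by omega)
      exact ⟨m + 1, by rw [pow_succ]; omega⟩

/-- `C(2^m - 1, r)` is odd for `r < 2^m`. -/
lemma choose_pow_sub_one_odd : ∀ m r : ℕ, r < 2 ^ m → (2 ^ m - 1).choose r % 2 = 1 := by
  intro m
  induction m with
  | zero => intro r hr; interval_cases r; simp
  | succ m ih =>
    intro r hr
    have hl := lucas_two (2 ^ m * 2 - 1) r
    have h1 : (2 ^ m * 2 - 1) % 2 = 1 := by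
      have : 1 ≤ 2 ^ m := Nat.one_le_two_pow
      omega
    have h2 : (2 ^ m * 2 - 1) / 2 = 2 ^ m - 1 := by
      have : 1 ≤ 2 ^ m := Nat.one_le_two_pow
      omega
    rw [h1, h2] at hl
    have hone : (Nat.choose 1 (r % 2)) = 1 := by
      rcases Nat.mod_two_eq_zero_or_one r with h | h <;> simp [h]
    rw [hone, one_mul] at hl
    have hr2 : r / 2 < 2 ^ m := by
      rw [pow_succ] at hr; omega
    have := ih (r / 2) hr2
    rw [show (2:ℕ) ^ (m+1) = 2 ^ m * 2 by rw [pow_succ]]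
    omega

/-- `C(2^(m+1) + 2^m, 2^(m+1))` is odd. -/
lemma choose_three_halves_odd : ∀ m : ℕ, (2 ^ (m + 1) + 2 ^ m).choose (2 ^ (m + 1)) % 2 = 1 := by
  intro m
  induction m with
  | zero => decide
  | succ m ih =>
    have hl := lucas_two (2 ^ (m + 2) + 2 ^ (m + 1)) (2 ^ (m + 2))
    have e1 : (2 ^ (m + 2) + 2 ^ (m + 1)) % 2 = 0 := by
      have : 2 ^ (m + 2) % 2 = 0 := by simp [pow_succ]
      have : 2 ^ (m + 1) % 2 = 0 := by simp [pow_succ]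
      omega
    have e2 : 2 ^ (m + 2) % 2 = 0 := by simp [pow_succ]
    have e3 : (2 ^ (m + 2) + 2 ^ (m + 1)) / 2 = 2 ^ (m + 1) + 2 ^ m := by
      rw [pow_succ, pow_succ]; omega
    have e4 : 2 ^ (m + 2) / 2 = 2 ^ (m + 1) := by rw [pow_succ (n := m + 1)]; omega
    rw [e1, e2, e3, e4] at hl
    simpa [ih] using hl

/-- Per-term divisibility by 8 for "generic" k. -/
lemma eight_dvd_term (n k : ℕ) (hk : 1 ≤ k)
    (h : (∀ m : ℕ, k ≠ 2 ^ m) ∨ (n ≠ k ∧ n ≠ 2 * k)) :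
    8 ∣ (n + k).choose (2 * k) * ((2 * k).choose k) ^ 2 * k.choose (n - k) := by
  rcases lt_or_ge n k with hnk | hnk
  · rw [Nat.choose_eq_zero_of_lt (show n + k < 2 * k by omega)]
    simp
  obtain ⟨j, hj⟩ : ∃ j, k = j + 1 := ⟨k - 1, by omega⟩
  have hcb : (2 * k).choose k = 2 * ((2 * j + 1).choose j) := by
    rw [hj]; exact central_eq_two_mul j
  set c := (2 * j + 1).choose j with hc
  rcases Nat.even_or_odd c with hce | hco
  · -- c even: 16 | term
    rcases hce with ⟨d, hd⟩
    refine Dvd.dvd.mul_right (Dvd.dvd.mul_left ?_ _) _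
    rw [hcb, hd]
    exact ⟨2 * d ^ 2, by ring⟩
  · -- c odd: k is a power of two
    have hcodd : c % 2 = 1 := Nat.odd_iff.mp hco
    obtain ⟨m, hm⟩ := pow_two_of_odd_choose j hcodd
    rw [← hj] at hm
    rcases h with hnp | ⟨hne1, hne2⟩
    · exact absurd hm (hnp m)
    · -- n ≠ k, n ≠ 2k : C(k, n-k) is even or zero
      rcases lt_or_ge k (n - k) with hbig | hsmall
      · rw [Nat.choose_eq_zero_of_lt hbig]; simp
      · have h0 : n - k ≠ 0 := by omega
        have hne : n - k ≠ k := by omega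
        have h2dvd : 2 ∣ k.choose (n - k) := by
          rw [hm]
          exact Nat.Prime.dvd_choose_pow Nat.prime_two
            (show n - 2 ^ m ≠ 0 by omega) (show n - 2 ^ m ≠ 2 ^ m by omega)
        rcases h2dvd with ⟨e, he⟩
        rw [hcb, he]
        exact ⟨((2 * j + 1).choose j) ^ 2 * ((n + k).choose (2 * k)) * e, by ring⟩

/-- Main divisibility: `8 ∣ uₙ` (as a natural sum) for `n ≥ 2`. -/
lemma eight_dvd_cooper_nat (n : ℕ) (hn : 2 ≤ n) :
    8 ∣ ∑ k ∈ Finset.range (n + 1),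
      n.choose k ^ 2 * (n + k).choose k * (2 * k).choose n := by
  have hsum : ∑ k ∈ Finset.range (n + 1),
      n.choose k ^ 2 * (n + k).choose k * (2 * k).choose n
      = ∑ k ∈ Finset.range (n + 1),
        (n + k).choose (2 * k) * ((2 * k).choose k) ^ 2 * k.choose (n - k) :=
    Finset.sum_congr rfl fun k _ => cooper_term_eq n k
  rw [hsum]
  set f : ℕ → ℕ := fun k => (n + k).choose (2 * k) * ((2 * k).choose k) ^ 2 * k.choose (n - k)
    with hf
  by_cases hpow : ∃ m : ℕ, n = 2 ^ m
  · -- n = 2^m with m ≥ 1; split off k = n/2 and k = n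
    obtain ⟨m, hm⟩ := hpow
    obtain ⟨i, hi⟩ : ∃ i, m = i + 1 := by
      rcases m with _ | i
      · exfalso; omega
      · exact ⟨i, rfl⟩
    have hmem_n : n ∈ Finset.range (n + 1) := by simp
    have hnhalf : 2 ^ i < n := by
      rw [hm, hi, pow_succ]
      have : 1 ≤ 2 ^ i := Nat.one_le_two_pow
      omega
    have hmem_half : (2 ^ i) ∈ (Finset.range (n + 1)).erase n := by
      simp only [Finset.mem_erase, Finset.mem_range]
      exact ⟨by omega, by omega⟩
    rw [← Finset.sum_erase_add _ f hmem_n, ← Finset.sum_erase_add _ f hmem_half]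
    have hgen : 8 ∣ ∑ k ∈ ((Finset.range (n + 1)).erase n).erase (2 ^ i), f k := by
      refine Finset.dvd_sum fun k hk => ?_
      simp only [Finset.mem_erase, Finset.mem_range] at hk
      obtain ⟨hkhalf, hkn, hklt⟩ := hk
      rcases Nat.eq_zero_or_pos k with hk0 | hk1
      · have : f k = 0 := by
          simp only [hf, hk0]
          rw [Nat.choose_eq_zero_of_lt (show (0:ℕ) < n - 0 by omega)]
          ring
        simp [this]
      · refine eight_dvd_term n k hk1 ?_
        by_cases hkp : ∃ j : ℕ, k = 2 ^ j
        · obtain ⟨j, hjk⟩ := hkp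
          right
          constructor
          · omega
          · intro hcon
            have : 2 ^ m = 2 ^ (j + 1) := by rw [← hm, hcon, hjk, pow_succ]; ring
            have hj : m = j + 1 := Nat.pow_right_injective (le_refl 2) this
            apply hkhalf
            rw [hjk, hi] at *
            omega
        · left; intro j hj; exact hkp ⟨j, hj⟩
    -- Now: 8 ∣ f (2^i) + f n
    have hfn : f n = ((2 * n).choose n) ^ 2 := by
      simp only [hf]
      rw [show n + n = 2 * n by ring, Nat.choose_self, Nat.sub_self, Nat.choose_zero_right]
      ring
    obtain ⟨j1, hj1⟩ : ∃ j, n = j + 1 := ⟨n - 1, by omega⟩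
    have hcbn : (2 * n).choose n = 2 * ((2 * j1 + 1).choose j1) := by
      rw [hj1]; exact central_eq_two_mul j1
    have hc1odd : (2 * j1 + 1).choose j1 % 2 = 1 := by
      have : (2 * j1 + 1) = 2 ^ (m + 1) - 1 := by
        rw [pow_succ, ← hm]; omega
      rw [this]
      exact choose_pow_sub_one_odd (m + 1) j1
        (by rw [pow_succ, ← hm]; omega)
    have hfhalf : f (2 ^ i)
        = (2 ^ (i + 1) + 2 ^ i).choose (2 ^ (i + 1)) * ((2 * 2 ^ i).choose (2 ^ i)) ^ 2 := by
      simp only [hf]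
      have h1 : n + 2 ^ i = 2 ^ (i + 1) + 2 ^ i := by rw [hm, hi]
      have h2 : 2 * 2 ^ i = 2 ^ (i + 1) := by rw [pow_succ]; ring
      have h3 : n - 2 ^ i = 2 ^ i := by
        rw [hm, hi, pow_succ]; omega
      rw [h1, h3, Nat.choose_self, h2]
      ring
    obtain ⟨j2, hj2⟩ : ∃ j, 2 ^ i = j + 1 := ⟨2 ^ i - 1, by have : 1 ≤ 2^i := Nat.one_le_two_pow; omega⟩
    have hcbh : (2 * 2 ^ i).choose (2 ^ i) = 2 * ((2 * j2 + 1).choose j2) := by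
      rw [hj2]; exact central_eq_two_mul j2
    have hc2odd : (2 * j2 + 1).choose j2 % 2 = 1 := by
      have he : (2 * j2 + 1) = 2 ^ (i + 1) - 1 := by
        rw [pow_succ]; omega
      rw [he]
      exact choose_pow_sub_one_odd (i + 1) j2 (by rw [pow_succ]; omega)
    have haodd : (2 ^ (i + 1) + 2 ^ i).choose (2 ^ (i + 1)) % 2 = 1 :=
      choose_three_halves_odd i
    have hpair : 8 ∣ f (2 ^ i) + f n := by
      rw [hfn, hfhalf, hcbn, hcbh]
      set a := (2 ^ (i + 1) + 2 ^ i).choose (2 ^ (i + 1))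
      set c := (2 * j1 + 1).choose j1
      set d := (2 * j2 + 1).choose j2
      have : a * (2 * d) ^ 2 + (2 * c) ^ 2 = 4 * (a * d ^ 2 + c ^ 2) := by ring
      rw [this]
      have ha : Odd a := Nat.odd_iff.mpr haodd
      have hd : Odd d := Nat.odd_iff.mpr hc2odd
      have hc : Odd c := Nat.odd_iff.mpr hc1odd
      have heven : Even (a * d ^ 2 + c ^ 2) := (ha.mul hd.pow).add_odd hc.pow
      rcases heven with ⟨t, ht⟩
      exact ⟨t, by rw [ht]; ring⟩
    omega
  · -- n not a power of two: every term divisible by 8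
    refine Finset.dvd_sum fun k hk => ?_
    rcases Nat.eq_zero_or_pos k with hk0 | hk1
    · rw [hk0, Nat.choose_eq_zero_of_lt (show (0:ℕ) < n - 0 by omega)]
      simp
    · refine eight_dvd_term n k hk1 ?_
      by_cases hkp : ∃ j : ℕ, k = 2 ^ j
      · obtain ⟨j, hjk⟩ := hkp
        right
        constructor
        · intro hcon; exact hpow ⟨j, by omega⟩
        · intro hcon
          exact hpow ⟨j + 1, by rw [hcon, hjk, pow_succ]; ring⟩
      · left; intro j hj; exact hkp ⟨j, hj⟩

lemma eight_dvd_cooper (n : ℕ) (hn : 2 ≤ n) : (8 : ℤ) ∣ cooperS7 n := by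
  have h := eight_dvd_cooper_nat n hn
  have hcast : cooperS7 n = ((∑ k ∈ Finset.range (n + 1),
      n.choose k ^ 2 * (n + k).choose k * (2 * k).choose n : ℕ) : ℤ) := by
    rw [cooperS7]
    push_cast
    ring
  rw [hcast]
  exact_mod_cast Int.natCast_dvd_natCast.mpr h

/-- For all `n ≥ 2`, Cooper's sequence `s₇` satisfies `u_{2n} ≡ uₙ (mod 8)`. -/
theorem cooperS7_two_mul_modEq (n : ℕ) (hn : 2 ≤ n) :
    cooperS7 (2 * n) ≡ cooperS7 n [ZMOD 8] := by
  have h1 := eight_dvd_cooper n hn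
  have h2 := eight_dvd_cooper (2 * n) (by omega)
  have : (8 : ℤ) ∣ cooperS7 (2 * n) - cooperS7 n := by
    exact dvd_sub h2 h1
  exact Int.ModEq.symm (Int.modEq_iff_dvd.mpr (by simpa using this))
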